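/- arXiv:2302.06652 — 2 statements merged into one kernel-verified Lean document; each statement's English description precedes it below -/
import Mathlib

section
/- Let p, q ∈ [1,∞] with 1/p + 1/q = 1, let F ⊆ ℝⁿ be a convex set, let η > 0, and let R : ℝⁿ → ℝ be differentiable and β-strongly convex with respect to the ℓ_p norm on F for some β > 0. Let D_R(a,b) = R(a) − R(b) − ⟨∇R(b), a − b⟩ denote the Bregman divergence of R. Let x ∈ [0,1]ⁿ, let g ∈ F, and let g' ∈ F minimize u ↦ η⟨u, x⟩ + D_R(u, g) over F (one step of Online Mirror Descent). Then ‖g' − g‖_p ≤ ηn/β. -/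
open scoped BigOperators ENNReal Topology
open Filter

noncomputable section

/-- The bilinear pairing `⟨a, b⟩ = ∑ i, a i * b i` on `ℝⁿ`. -/
def ip {n : ℕ} (a b : Fin n → ℝ) : ℝ := ∑ i, a i * b i

/-- The `ℓ_p` norm on `ℝⁿ`, for `p ∈ [1, ∞]` (`‖a‖_∞ = max_i |a i|`). -/
def lpNorm {n : ℕ} (p : ℝ≥0∞) (a : Fin n → ℝ) : ℝ :=
  if p = ⊤ then ⨆ i, |a i| else (∑ i, |a i| ^ p.toReal) ^ (1 / p.toReal)

/-- `R` is `β`-strongly convex with respect to the `ℓ_p` norm on the convex set `F`. -/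
def StronglyConvexOnWrt {n : ℕ} (F : Set (Fin n → ℝ)) (β : ℝ) (p : ℝ≥0∞)
    (R : (Fin n → ℝ) → ℝ) : Prop :=
  ∀ a ∈ F, ∀ b ∈ F, ∀ l : ℝ, 0 ≤ l → l ≤ 1 →
    R (l • a + (1 - l) • b) ≤
      l * R a + (1 - l) * R b - β / 2 * l * (1 - l) * (lpNorm p (a - b)) ^ 2

/-- The Bregman divergence `D_R(a,b) = R a - R b - ⟨∇R b, a - b⟩`. -/
def bregman {n : ℕ} (R : (Fin n → ℝ) → ℝ) (a b : Fin n → ℝ) : ℝ :=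
  R a - R b - fderiv ℝ R b (a - b)

lemma abs_le_lpNorm {n : ℕ} (p : ℝ≥0∞) (hp : 1 ≤ p) (a : Fin n → ℝ) (i : Fin n) :
    |a i| ≤ lpNorm p a := by
  unfold lpNorm
  split_ifs with h
  · exact le_ciSup (f := fun j => |a j|) (Set.finite_range _).bddAbove i
  · have hp0 : p ≠ 0 := by intro h0; simp [h0] at hp
    have hpr : 0 < p.toReal := ENNReal.toReal_pos hp0 h
    have h1 : |a i| ^ p.toReal ≤ ∑ j, |a j| ^ p.toReal :=
      Finset.single_le_sum (fun j _ => Real.rpow_nonneg (abs_nonneg _) _) (Finset.mem_univ i)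
    calc |a i| = (|a i| ^ p.toReal) ^ (1 / p.toReal) := by
          rw [one_div, Real.rpow_rpow_inv (abs_nonneg _) hpr.ne']
      _ ≤ _ := Real.rpow_le_rpow (Real.rpow_nonneg (abs_nonneg _) _) h1 (by positivity)

lemma lpNorm_nonneg {n : ℕ} (p : ℝ≥0∞) (a : Fin n → ℝ) : 0 ≤ lpNorm p a := by
  unfold lpNorm
  split_ifs with h
  · exact Real.iSup_nonneg fun i => abs_nonneg _
  · exact Real.rpow_nonneg (Finset.sum_nonneg fun j _ => Real.rpow_nonneg (abs_nonneg _) _) _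

/-- **One step of Online Mirror Descent moves by at most `η n / β`.**
If `g' ∈ F` minimizes `u ↦ η ⟨u, x⟩ + D_R(u, g)` over `F`, with `R` differentiable and
`β`-strongly convex w.r.t. `ℓ_p` on the convex set `F`, and `x ∈ [0,1]ⁿ`, then
`‖g' - g‖_p ≤ η n / β`. -/
theorem omd_step_close {n : ℕ} (p q : ℝ≥0∞)
    (hp : 1 ≤ p) (hq : 1 ≤ q) (hpq : 1 / p + 1 / q = 1)
    (F : Set (Fin n → ℝ)) (hFconv : Convex ℝ F)
    (η : ℝ) (hη : 0 < η) (β : ℝ) (hβ : 0 < β)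
    (R : (Fin n → ℝ) → ℝ) (hdiff : Differentiable ℝ R)
    (hR : StronglyConvexOnWrt F β p R)
    (x : Fin n → ℝ) (hx : x ∈ Set.Icc (0 : Fin n → ℝ) 1)
    (g g' : Fin n → ℝ) (hg : g ∈ F) (hg'mem : g' ∈ F)
    (hg'min : ∀ u ∈ F, η * ip g' x + bregman R g' g ≤ η * ip u x + bregman R u g) :
    lpNorm p (g' - g) ≤ η * n / β := by
  set t : ℝ := lpNorm p (g' - g) with ht
  have ht0 : 0 ≤ t := lpNorm_nonneg p _
  set v : Fin n → ℝ := g' - g with hv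
  set L : (Fin n → ℝ) →L[ℝ] ℝ := fderiv ℝ R g with hL
  -- Step A: for all l ∈ [0,1), β/2 * l * t^2 ≤ C
  set C : ℝ := η * ip g x - η * ip g' x - bregman R g' g with hC
  have hA : ∀ l : ℝ, 0 ≤ l → l < 1 → β / 2 * l * t ^ 2 ≤ C := by
    intro l hl0 hl1
    have hl1' : 0 < 1 - l := by linarith
    have hmem : l • g' + (1 - l) • g ∈ F := hFconv hg'mem hg hl0 hl1'.le (by ring)
    have h1 := hg'min _ hmem
    have h2 := hR g' hg'mem g hg l hl0 hl1.le
    have hip : ip (l • g' + (1 - l) • g) x = l * ip g' x + (1 - l) * ip g x := by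
      simp only [ip, Finset.mul_sum, ← Finset.sum_add_distrib]
      refine Finset.sum_congr rfl fun j _ => ?_
      simp [Pi.add_apply, Pi.smul_apply, smul_eq_mul]; ring
    have hsub : (l • g' + (1 - l) • g) - g = l • v := by
      funext j; simp [hv, Pi.smul_apply, smul_eq_mul]; ring
    simp only [bregman, hip, hsub, map_smul, smul_eq_mul, ← hL, ← hv] at h1 ⊢
    simp only [← hv, ← ht] at h2
    simp only [bregman, ← hL, ← hv] at hC
    rw [hC]
    nlinarith [h1, h2, hl1']
  -- Step A': take l → 1
  have hC0 : 0 ≤ C := by simpa using hA 0 le_rfl one_pos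
  have hAlim : β / 2 * t ^ 2 ≤ C := by
    by_contra hcon
    push_neg at hcon
    obtain ⟨s, hs⟩ : ∃ s : ℝ, s = β / 2 * t ^ 2 := ⟨_, rfl⟩
    rw [← hs] at hcon
    have hs0 : 0 < s := lt_of_le_of_lt hC0 hcon
    have hl0 : 0 ≤ (C + s) / (2 * s) := by positivity
    have hl1 : (C + s) / (2 * s) < 1 := by
      rw [div_lt_one (by positivity)]; linarith
    have hkey := hA _ hl0 hl1
    have h1 : β / 2 * ((C + s) / (2 * s)) * t ^ 2 = (C + s) / (2 * s) * s := by
      rw [hs]; ring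
    have h2 : (C + s) / (2 * s) * s = (C + s) / 2 := by
      field_simp
    rw [h1, h2] at hkey
    linarith
  -- Step B: β/2 * t^2 ≤ bregman R g' g
  have hB : β / 2 * t ^ 2 ≤ bregman R g' g := by
    have hφ : HasDerivAt (fun l : ℝ => R (g + l • v)) (L v) 0 := by
      have h1 : HasDerivAt (fun l : ℝ => g + l • v) v 0 := by
        simpa using ((hasDerivAt_id (0 : ℝ)).smul_const v).const_add g
      have h2 := (hdiff (g + (0 : ℝ) • v)).hasFDerivAt.comp_hasDerivAt 0 h1
      simpa [hL, Function.comp_def] using h2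
    rw [hasDerivAt_iff_tendsto_slope] at hφ
    have hmono : 𝓝[>] (0 : ℝ) ≤ 𝓝[≠] (0 : ℝ) :=
      nhdsWithin_mono _ fun y hy => ne_of_gt hy
    have hφ' := hφ.mono_left hmono
    have hg2 : Filter.Tendsto (fun l : ℝ => R g' - R g - β / 2 * (1 - l) * t ^ 2)
        (𝓝[>] (0 : ℝ)) (𝓝 (R g' - R g - β / 2 * (1 - 0) * t ^ 2)) := by
      apply Filter.Tendsto.mono_left _ nhdsWithin_le_nhds
      exact (Continuous.tendsto (by fun_prop) 0)
    have hle : L v ≤ R g' - R g - β / 2 * (1 - 0) * t ^ 2 := by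
      refine le_of_tendsto_of_tendsto hφ' hg2 ?_
      have hmem : Set.Ioo (0 : ℝ) 1 ∈ 𝓝[>] (0 : ℝ) :=
        Ioo_mem_nhdsGT_of_mem ⟨le_refl 0, one_pos⟩
      filter_upwards [hmem] with l hl
      have h2 := hR g' hg'mem g hg l hl.1.le hl.2.le
      have heq : l • g' + (1 - l) • g = g + l • v := by
        funext j; simp [hv, Pi.smul_apply, smul_eq_mul]; ring
      rw [heq] at h2
      have hslope : slope (fun l : ℝ => R (g + l • v)) 0 l
          = (R (g + l • v) - R g) / l := by
        simp [slope_def_field]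
      rw [hslope, div_le_iff₀ hl.1]
      nlinarith [h2]
    simp only [bregman, ← hL, ← hv]
    linarith
  -- Step C: ip (g - g') x ≤ n * t
  have hipb : ip g x - ip g' x ≤ n * t := by
    have : ∀ i : Fin n, (g i - g' i) * x i ≤ t := by
      intro i
      have h1 : (g i - g' i) * x i ≤ |g i - g' i| * |x i| := by
        calc (g i - g' i) * x i ≤ |(g i - g' i) * x i| := le_abs_self _
          _ = |g i - g' i| * |x i| := abs_mul _ _
      have hx0 : (0 : ℝ) ≤ x i := by simpa using hx.1 i
      have hx1 : x i ≤ 1 := by simpa using hx.2 i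
      have h2 : |x i| ≤ 1 := by
        rw [abs_le]; exact ⟨by linarith, hx1⟩
      have h3 : |g i - g' i| = |(g' - g) i| := by rw [Pi.sub_apply, abs_sub_comm]
      calc (g i - g' i) * x i ≤ |g i - g' i| * 1 :=
            h1.trans (mul_le_mul_of_nonneg_left h2 (abs_nonneg _))
        _ = |(g' - g) i| := by rw [mul_one, h3]
        _ ≤ t := abs_le_lpNorm p hp _ i
    calc ip g x - ip g' x = ∑ i, (g i - g' i) * x i := by
          simp [ip, sub_mul, Finset.sum_sub_distrib]
      _ ≤ ∑ _i : Fin n, t := Finset.sum_le_sum fun i _ => this i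
      _ = n * t := by simp [mul_comm]
  -- Combine
  have hfinal : β * t ^ 2 ≤ η * (n * t) := by
    have : β / 2 * t ^ 2 + β / 2 * t ^ 2 ≤ η * (ip g x - ip g' x) := by
      simp only [hC] at hAlim; linarith
    calc β * t ^ 2 = β / 2 * t ^ 2 + β / 2 * t ^ 2 := by ring
      _ ≤ η * (ip g x - ip g' x) := this
      _ ≤ η * (n * t) := mul_le_mul_of_nonneg_left hipb hη.le
  rcases eq_or_lt_of_le ht0 with h | h
  · rw [← h]; positivity
  · rw [le_div_iff₀ hβ]
    have h1 : β * t * t ≤ η * ↑n * t := by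
      have e1 : β * t * t = β * t ^ 2 := by ring
      have e2 : η * ↑n * t = η * (↑n * t) := by ring
      rw [e1, e2]; exact hfinal
    have h2 : β * t ≤ η * ↑n := le_of_mul_le_mul_right h1 h
    linarith
end
end

section
/- Let F ⊆ [0,1]ⁿ be a nonempty convex set, η > 0, α ≥ 1, and R : ℝⁿ → ℝ with R(f) ≥ 0 for all f ∈ F. Let x₀ = 0 and x₁,…,x_T ∈ [0,1]ⁿ. For t = 1,…,T define: f_t ∈ F minimizing f ↦ ⟨f, Σ_{s=1}^{t-1} x_s + α x_{t-1}⟩ + R(f)/η over F (the AFTRL iterate), h_t ∈ F minimizing f ↦ ⟨f, Σ_{s=1}^{t-1} x_s + α x_t⟩ + R(f)/η over F, and g_t ∈ F minimizing f ↦ ⟨f, Σ_{s=1}^{t} x_s⟩ + R(f)/η over F. Then for every f' ∈ F: Σ_{t=1}^T ⟨f_t − h_t, x_{t-1}⟩ + Σ_{t=1}^T ⟨h_t, x_t⟩ ≤ (1/α)⟨f', Σ_{t=1}^T x_t⟩ + ((α−1)/α) Σ_{t=1}^T ⟨g_t, x_t⟩ + R(f')/(ηα). -/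
open scoped BigOperators

noncomputable section

lemma ip_add_right {n : ℕ} (a b c : Fin n → ℝ) : ip a (b + c) = ip a b + ip a c := by
  simp [ip, mul_add, Finset.sum_add_distrib]

lemma ip_smul_right {n : ℕ} (a : Fin n → ℝ) (r : ℝ) (b : Fin n → ℝ) :
    ip a (r • b) = r * ip a b := by
  simp [ip, Finset.mul_sum, mul_left_comm]

lemma ip_sub_left {n : ℕ} (a b c : Fin n → ℝ) : ip (a - b) c = ip a c - ip b c := by
  simp [ip, sub_mul, Finset.sum_sub_distrib]

lemma ip_zero_right {n : ℕ} (a : Fin n → ℝ) : ip a 0 = 0 := by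
  simp [ip]

/-- **Key induction inequality for AFTRL** (Inequality (5) in the paper).
With `x 0 = 0`, AFTRL iterates `f t`, one-step-lookahead iterates `h t` and
be-the-leader iterates `g t`, for every `f' ∈ F`:
`∑_{t=1}^T ⟨f t - h t, x (t-1)⟩ + ∑_{t=1}^T ⟨h t, x t⟩ ≤
  (1/α) ⟨f', ∑_{t=1}^T x t⟩ + ((α-1)/α) ∑_{t=1}^T ⟨g t, x t⟩ + R f' / (η α)`. -/
theorem aftrl_induction_inequality {n T : ℕ}
    (F : Set (Fin n → ℝ)) (hF : F.Nonempty) (hFsub : F ⊆ Set.Icc 0 1) (hFconv : Convex ℝ F)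
    (η : ℝ) (hη : 0 < η) (α : ℝ) (hα : 1 ≤ α)
    (R : (Fin n → ℝ) → ℝ) (hR : ∀ f ∈ F, 0 ≤ R f)
    (x : ℕ → (Fin n → ℝ)) (hx0 : x 0 = 0)
    (hx : ∀ t ∈ Finset.Icc 1 T, x t ∈ Set.Icc (0 : Fin n → ℝ) 1)
    (f h g : ℕ → (Fin n → ℝ))
    (hf : ∀ t ∈ Finset.Icc 1 T, f t ∈ F ∧
      ∀ f' ∈ F,
        ip (f t) ((∑ s ∈ Finset.Icc 1 (t - 1), x s) + α • x (t - 1)) + R (f t) / η ≤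
        ip f' ((∑ s ∈ Finset.Icc 1 (t - 1), x s) + α • x (t - 1)) + R f' / η)
    (hh : ∀ t ∈ Finset.Icc 1 T, h t ∈ F ∧
      ∀ f' ∈ F,
        ip (h t) ((∑ s ∈ Finset.Icc 1 (t - 1), x s) + α • x t) + R (h t) / η ≤
        ip f' ((∑ s ∈ Finset.Icc 1 (t - 1), x s) + α • x t) + R f' / η)
    (hg : ∀ t ∈ Finset.Icc 1 T, g t ∈ F ∧
      ∀ f' ∈ F,
        ip (g t) (∑ s ∈ Finset.Icc 1 t, x s) + R (g t) / η ≤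
        ip f' (∑ s ∈ Finset.Icc 1 t, x s) + R f' / η) :
    ∀ f' ∈ F,
      (∑ t ∈ Finset.Icc 1 T, ip (f t - h t) (x (t - 1))) +
        (∑ t ∈ Finset.Icc 1 T, ip (h t) (x t)) ≤
      (1 / α) * ip f' (∑ t ∈ Finset.Icc 1 T, x t) +
        ((α - 1) / α) * ∑ t ∈ Finset.Icc 1 T, ip (g t) (x t) + R f' / (η * α) := by
  have hα0 : (0 : ℝ) < α := lt_of_lt_of_le one_pos hα
  induction T with
  | zero =>
    intro f' hf'
    have hE : Finset.Icc 1 0 = (∅ : Finset ℕ) := by simp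
    rw [hE]
    simp only [Finset.sum_empty, ip_zero_right, mul_zero, add_zero, zero_add]
    have := hR f' hf'
    have := mul_pos hη hα0
    positivity
  | succ T IH =>
    intro f' hf'
    have hsub : Finset.Icc 1 T ⊆ Finset.Icc 1 (T + 1) :=
      Finset.Icc_subset_Icc_right (Nat.le_succ T)
    have hmem : T + 1 ∈ Finset.Icc 1 (T + 1) := by simp
    obtain ⟨haF, ha⟩ := hf (T + 1) hmem
    obtain ⟨hbF, hb⟩ := hh (T + 1) hmem
    obtain ⟨hcF, hc⟩ := hg (T + 1) hmem
    simp only [Nat.add_sub_cancel] at ha hb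
    have IH' := IH (fun t ht => hx t (hsub ht)) (fun t ht => hf t (hsub ht))
      (fun t ht => hh t (hsub ht)) (fun t ht => hg t (hsub ht)) (f (T + 1)) haF
    set S : Fin n → ℝ := ∑ s ∈ Finset.Icc 1 T, x s with hS
    set L1 : ℝ := ∑ t ∈ Finset.Icc 1 T, ip (f t - h t) (x (t - 1)) with hL1
    set L2 : ℝ := ∑ t ∈ Finset.Icc 1 T, ip (h t) (x t) with hL2
    set G : ℝ := ∑ t ∈ Finset.Icc 1 T, ip (g t) (x t) with hG
    have key2 := ha (h (T + 1)) hbF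
    have key3 := hb (g (T + 1)) hcF
    have key4 := hc f' hf'
    rw [Finset.sum_Icc_succ_top (Nat.le_add_left 1 T)] at key4
    simp only [ip_add_right, ip_smul_right] at key2 key3 key4
    rw [show (∑ k ∈ Finset.Icc 1 T, x k) = S from hS.symm] at key4
    -- multiply IH' by α
    have IHmul : α * (L1 + L2) ≤ ip (f (T + 1)) S + (α - 1) * G + R (f (T + 1)) / η := by
      have h1 : α * (L1 + L2) ≤ α * ((1 / α) * ip (f (T + 1)) S + ((α - 1) / α) * G
          + R (f (T + 1)) / (η * α)) := by
        exact mul_le_mul_of_nonneg_left IH' hα0.le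
      refine h1.trans_eq ?_
      field_simp
    -- rewrite the goal
    rw [Finset.sum_Icc_succ_top (Nat.le_add_left 1 (T : ℕ)),
        Finset.sum_Icc_succ_top (Nat.le_add_left 1 (T : ℕ)),
        Finset.sum_Icc_succ_top (Nat.le_add_left 1 (T : ℕ)),
        Finset.sum_Icc_succ_top (Nat.le_add_left 1 (T : ℕ))]
    simp only [Nat.add_sub_cancel, ip_add_right, ip_sub_left]
    rw [show (∑ k ∈ Finset.Icc 1 T, x k) = S from hS.symm]
    have hL1' : (∑ t ∈ Finset.Icc 1 T, (ip (f t) (x (t - 1)) - ip (h t) (x (t - 1)))) = L1 := by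
      rw [hL1]; exact Finset.sum_congr rfl fun t _ => (ip_sub_left _ _ _).symm
    rw [← mul_le_mul_iff_right₀ hα0]
    have hrhs : α * ((1 / α) * (ip f' S + ip f' (x (T + 1)))
        + ((α - 1) / α) * (G + ip (g (T + 1)) (x (T + 1))) + R f' / (η * α))
        = ip f' S + ip f' (x (T + 1)) + (α - 1) * (G + ip (g (T + 1)) (x (T + 1)))
          + R f' / η := by
      field_simp
    rw [hrhs]
    nlinarith [key2, key3, key4, IHmul, hL1']
end
end
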